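/- arXiv:2207.12206 — 2 statements merged into one kernel-verified Lean document; each statement's English description precedes it below -/
import Mathlib

section
/- Let Y₁, …, Yₙ be real-valued random variables on a probability space (Ω, P), and let u₁, …, uₙ ∈ ℝ and q₁, …, qₙ ∈ ℝ satisfy P(Yᵢ ≤ qᵢ) ≥ uᵢ for every i. Set w = (∑_{i=1}^n uᵢ) + 1 − n and assume w > 0. Let Z = ∑_{i=1}^n Yᵢ and define the w-quantile of Z as Q_Z^w = inf{ z ∈ ℝ : P(Z ≤ z) ≥ w }. Then Q_Z^w ≤ ∑_{i=1}^n qᵢ. -/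
open MeasureTheory Filter Topology

/-- Upper bound on the `w`-quantile of a sum of random variables in terms of
the sum of (upper bounds on) quantiles of the summands, where
`w = ∑ i, u i + 1 − n`. -/
theorem quantile_sum_le_sum_quantiles
    {Ω : Type*} [MeasurableSpace Ω] (P : Measure Ω) [IsProbabilityMeasure P]
    (n : ℕ) (Y : Fin n → Ω → ℝ) (hY : ∀ i, Measurable (Y i))
    (u : Fin n → ℝ) (q : Fin n → ℝ)
    (hq : ∀ i, u i ≤ (P {ω | Y i ω ≤ q i}).toReal)
    (w : ℝ) (hw : w = (∑ i, u i) + 1 - n) (hw0 : 0 < w)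
    (Z : Ω → ℝ) (hZ : Z = fun ω => ∑ i, Y i ω) :
    sInf {z : ℝ | w ≤ (P {ω | Z ω ≤ z}).toReal} ≤ ∑ i, q i := by
  have hZm : Measurable Z := by
    rw [hZ]; exact Finset.measurable_sum _ (fun i _ => hY i)
  set A : Fin n → Set Ω := fun i => {ω | Y i ω ≤ q i} with hA
  have hAm : ∀ i, MeasurableSet (A i) := fun i => measurableSet_le (hY i) measurable_const
  -- Fréchet–Hoeffding lower bound
  have hfin : ∀ s : Set Ω, P s ≠ ⊤ := fun s => measure_ne_top P s
  have hsub : (⋂ i, A i) ⊆ {ω | Z ω ≤ ∑ i, q i} := by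
    intro ω hω
    simp only [Set.mem_iInter] at hω
    simp only [Set.mem_setOf_eq, hZ]
    exact Finset.sum_le_sum (fun i _ => hω i)
  have hcompl : P (⋂ i, A i) = 1 - P (⋃ i, (A i)ᶜ) := by
    have h : (⋃ i, (A i)ᶜ) = (⋂ i, A i)ᶜ := (Set.compl_iInter A).symm
    rw [h, prob_compl_eq_one_sub (MeasurableSet.iInter hAm),
      ENNReal.sub_sub_cancel ENNReal.one_ne_top prob_le_one]
  have hunion : (P (⋃ i, (A i)ᶜ)).toReal ≤ ∑ i, (1 - (P (A i)).toReal) := by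
    calc (P (⋃ i, (A i)ᶜ)).toReal ≤ (∑ i, P (A i)ᶜ).toReal := by
          apply ENNReal.toReal_mono
          · exact ENNReal.sum_ne_top.2 (fun i _ => hfin _)
          · exact measure_iUnion_fintype_le P _
      _ = ∑ i, (P (A i)ᶜ).toReal := by
          rw [ENNReal.toReal_sum (fun i _ => hfin _)]
      _ = ∑ i, (1 - (P (A i)).toReal) := by
          refine Finset.sum_congr rfl (fun i _ => ?_)
          rw [prob_compl_eq_one_sub (hAm i), ENNReal.toReal_sub_of_le (prob_le_one) ENNReal.one_ne_top]
          simp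
  have hkey : w ≤ (P (⋂ i, A i)).toReal := by
    have h1 : (P (⋂ i, A i)).toReal = 1 - (P (⋃ i, (A i)ᶜ)).toReal := by
      rw [hcompl, ENNReal.toReal_sub_of_le (prob_le_one) ENNReal.one_ne_top]
      simp
    rw [h1, hw]
    have h2 : ∑ i, (1 - (P (A i)).toReal) ≤ ∑ i, (1 - u i) :=
      Finset.sum_le_sum (fun i _ => by linarith [hq i])
    have h3 : ∑ i : Fin n, (1 - u i) = n - ∑ i, u i := by
      rw [Finset.sum_sub_distrib]; simp
    linarith [hunion]
  have hmem : (∑ i, q i) ∈ {z : ℝ | w ≤ (P {ω | Z ω ≤ z}).toReal} := by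
    refine le_trans hkey (ENNReal.toReal_mono (hfin _) (measure_mono hsub))
  -- bounded below
  have hbdd : BddBelow {z : ℝ | w ≤ (P {ω | Z ω ≤ z}).toReal} := by
    have htend : Tendsto (fun k : ℕ => P {ω | Z ω ≤ -(k : ℝ)}) atTop (𝓝 0) := by
      have hempty : (⋂ k : ℕ, {ω | Z ω ≤ -(k : ℝ)}) = ∅ := by
        ext ω
        simp only [Set.mem_iInter, Set.mem_setOf_eq, Set.mem_empty_iff_false, iff_false, not_forall]
        obtain ⟨k, hk⟩ := exists_nat_gt (-(Z ω))
        exact ⟨k, by push_neg; linarith⟩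
      have := tendsto_measure_iInter_atTop (μ := P) (s := fun k : ℕ => {ω | Z ω ≤ -(k : ℝ)})
        (fun k => (measurableSet_le hZm measurable_const).nullMeasurableSet)
        (fun a b hab => by
          intro ω hω
          simp only [Set.mem_setOf_eq] at *
          have : -(b : ℝ) ≤ -(a : ℝ) := by exact_mod_cast neg_le_neg (by exact_mod_cast hab)
          linarith)
        ⟨0, hfin _⟩
      rwa [hempty, measure_empty] at this
    have : ∀ᶠ k : ℕ in atTop, P {ω | Z ω ≤ -(k : ℝ)} < ENNReal.ofReal w :=
      htend.eventually_lt_const (by simp [hw0])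
    obtain ⟨k, hk⟩ := this.exists
    refine ⟨-(k : ℝ), fun z hz => ?_⟩
    by_contra hlt
    push_neg at hlt
    have hmono : P {ω | Z ω ≤ z} ≤ P {ω | Z ω ≤ -(k : ℝ)} :=
      measure_mono (fun ω hω => le_trans hω hlt.le)
    have : (P {ω | Z ω ≤ z}).toReal < w := by
      have := lt_of_le_of_lt hmono hk
      calc (P {ω | Z ω ≤ z}).toReal < (ENNReal.ofReal w).toReal :=
            ENNReal.toReal_strict_mono (by simp) this
        _ = w := ENNReal.toReal_ofReal hw0.le
    exact absurd hz (not_le.2 this)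
  exact csInf_le hbdd hmem
end

section
/- Let Y₁, …, Yₙ be real-valued random variables on a probability space (Ω, P), each in L²(P), and let u₁, …, uₙ ∈ ℝ and q₁, …, qₙ ∈ ℝ satisfy P(Yᵢ ≤ qᵢ) ≥ uᵢ for every i. Set w = (∑_{i=1}^n uᵢ) + 1 − n and assume 0 < w < 1. Let Z = ∑_{i=1}^n Yᵢ, μ_Z = E[Z] = ∑_{i=1}^n E[Yᵢ], and σ_Z = √Var(Z). Then (μ_Z − ∑_{i=1}^n qᵢ)·√(w/(1 − w)) ≤ σ_Z. -/
open MeasureTheory ProbabilityTheory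

lemma cantelli_aux {Ω : Type*} [MeasurableSpace Ω] (P : Measure Ω) [IsProbabilityMeasure P]
    {X : Ω → ℝ} (hXm : Measurable X) (hX : MemLp X 2 P) {t : ℝ} (ht : 0 < t) :
    (P {ω | X ω ≤ (∫ ω, X ω ∂P) - t}).toReal ≤
      variance X P / (variance X P + t ^ 2) := by
  set μ := ∫ ω, X ω ∂P with hμ
  set v := variance X P with hv
  have hv0 : 0 ≤ v := variance_nonneg _ _
  set lam := v / t with hlam
  have hlam0 : 0 ≤ lam := by positivity
  -- integrability facts
  have hXint : Integrable X P := hX.integrable (by norm_num)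
  have hsub : MemLp (fun ω => X ω - μ) 2 P := hX.sub (memLp_const μ)
  have hsq : Integrable (fun ω => (X ω - μ) ^ 2) P := hsub.integrable_sq
  have hsubint : Integrable (fun ω => X ω - μ) P := hXint.sub (integrable_const μ)
  have hg : Integrable (fun ω => (X ω - μ) ^ 2 - 2 * lam * (X ω - μ) + lam ^ 2) P :=
    (hsq.sub (hsubint.const_mul _)).add (integrable_const _)
  have hmean0 : ∫ ω, (X ω - μ) ∂P = 0 := by
    rw [integral_sub hXint (integrable_const μ), integral_const]
    simp [hμ]
  have hvar : v = ∫ ω, (X ω - μ) ^ 2 ∂P := by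
    rw [hv, variance_eq_integral hXm.aemeasurable]
  have hint : ∫ ω, ((X ω - μ) - lam) ^ 2 ∂P = v + lam ^ 2 := by
    have : ∀ ω, ((X ω - μ) - lam) ^ 2
        = (X ω - μ) ^ 2 - 2 * lam * (X ω - μ) + lam ^ 2 := by intro ω; ring
    simp_rw [this]
    have h2 : ∫ ω, ((X ω - μ) ^ 2 - 2 * lam * (X ω - μ) + lam ^ 2) ∂P
        = ∫ ω, ((X ω - μ) ^ 2 - (2 * lam * (X ω - μ) - lam ^ 2)) ∂P := by
      congr 1; funext ω; ring
    have h3a : Integrable (fun ω => 2 * lam * (X ω - μ)) P := hsubint.const_mul (2 * lam)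
    have h3 : Integrable (fun ω => 2 * lam * (X ω - μ) - lam ^ 2) P :=
      h3a.sub (integrable_const _)
    rw [h2, integral_sub hsq h3, integral_sub h3a (integrable_const _),
      integral_const_mul, hmean0, integral_const]
    simp [← hvar]
  -- the event
  set s : Set Ω := {ω | X ω ≤ μ - t} with hs
  have hsm : MeasurableSet s := measurableSet_le hXm measurable_const
  have hgg : Integrable (fun ω => ((X ω - μ) - lam) ^ 2) P :=
    (hsub.sub (memLp_const lam)).integrable_sq
  have hpt : ((t + lam) ^ 2) * (P s).toReal ≤ v + lam ^ 2 := by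
    rw [← hint]
    have h1 : ∫ ω in s, ((t + lam) ^ 2) ∂P ≤ ∫ ω in s, ((X ω - μ) - lam) ^ 2 ∂P := by
      apply setIntegral_mono_on (integrableOn_const (measure_ne_top _ _))
        hgg.integrableOn hsm
      intro ω hω
      have h2 : X ω - μ - lam ≤ -(t + lam) := by
        have : X ω ≤ μ - t := hω
        linarith
      nlinarith [h2, ht, hlam0, sq_nonneg (X ω - μ - lam + (t + lam))]
      -- fallback
    have h3 : ∫ ω in s, ((X ω - μ) - lam) ^ 2 ∂P ≤ ∫ ω, ((X ω - μ) - lam) ^ 2 ∂P := by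
      apply setIntegral_le_integral hgg
      filter_upwards with ω using sq_nonneg _
    calc ((t + lam) ^ 2) * (P s).toReal = ∫ ω in s, ((t + lam) ^ 2) ∂P := by
          rw [setIntegral_const, smul_eq_mul, mul_comm]; rfl
      _ ≤ _ := h1.trans h3
  -- algebra
  have hden : 0 < (t + lam) ^ 2 := by positivity
  have h4 : (P s).toReal ≤ (v + lam ^ 2) / (t + lam) ^ 2 := by
    rw [le_div_iff₀ hden]; linarith [hpt]
  have h5 : (v + lam ^ 2) / (t + lam) ^ 2 = v / (v + t ^ 2) := by
    rw [hlam]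
    field_simp
    ring
  linarith [h4, h5 ▸ h4]


/-- Equation (7) of the paper: lower bound on the standard deviation of a sum
of random variables in terms of the sum of (upper bounds on) quantiles of the
summands, with `w = ∑ i, u i + 1 − n`. -/
theorem std_sum_lower_bound_from_summand_quantiles
    {Ω : Type*} [MeasurableSpace Ω] (P : Measure Ω) [IsProbabilityMeasure P]
    (n : ℕ) (Y : Fin n → Ω → ℝ)
    (hYm : ∀ i, Measurable (Y i)) (hY : ∀ i, MemLp (Y i) 2 P)
    (u : Fin n → ℝ) (q : Fin n → ℝ)
    (hq : ∀ i, u i ≤ (P {ω | Y i ω ≤ q i}).toReal)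
    (w : ℝ) (hw : w = (∑ i, u i) + 1 - n) (hw0 : 0 < w) (hw1 : w < 1)
    (Z : Ω → ℝ) (hZ : Z = fun ω => ∑ i, Y i ω)
    (μZ σZ : ℝ) (hμZ : μZ = ∫ ω, Z ω ∂P) (hσZ : σZ = Real.sqrt (variance Z P)) :
    (μZ - ∑ i, q i) * Real.sqrt (w / (1 - w)) ≤ σZ := by
  have hσ0 : 0 ≤ σZ := hσZ ▸ Real.sqrt_nonneg _
  set t : ℝ := μZ - ∑ i, q i with htdef
  by_cases ht : 0 < t
  swap
  · exact (mul_nonpos_of_nonpos_of_nonneg (not_lt.1 ht) (Real.sqrt_nonneg _)).trans hσ0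
  -- measurability / integrability of Z
  have hZm : Measurable Z := by
    rw [hZ]; exact Finset.measurable_sum _ fun i _ => hYm i
  have hZ2 : MemLp Z 2 P := by
    rw [hZ]
    have h := memLp_finset_sum (μ := P) Finset.univ (fun i _ => hY i)
    simpa using h
  -- Bonferroni
  set A : Fin n → Set Ω := fun i => {ω | Y i ω ≤ q i} with hA
  have hAm : ∀ i, MeasurableSet (A i) := fun i =>
    measurableSet_le (hYm i) measurable_const
  have hUm : MeasurableSet (⋃ i, (A i)ᶜ) := MeasurableSet.iUnion fun i => (hAm i).compl
  have hU : (P (⋃ i, (A i)ᶜ)).toReal ≤ ∑ i, (P (A i)ᶜ).toReal := by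
    have h1 : P (⋃ i, (A i)ᶜ) ≤ ∑ i, P (A i)ᶜ := measure_iUnion_fintype_le _ _
    have h2 : (∑ i, P (A i)ᶜ).toReal = ∑ i, (P (A i)ᶜ).toReal :=
      ENNReal.toReal_sum fun i _ => measure_ne_top _ _
    have h3 : (∑ i, P (A i)ᶜ) ≠ ⊤ := (ENNReal.sum_lt_top.2 fun i _ => measure_lt_top _ _).ne
    exact h2 ▸ ENNReal.toReal_mono h3 h1
  have hcompl : ∀ i, (P (A i)ᶜ).toReal = 1 - (P (A i)).toReal := by
    intro i
    have := measure_compl (μ := P) (hAm i) (measure_ne_top P _)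
    rw [this, measure_univ, ENNReal.toReal_sub_of_le (prob_le_one (μ := P) (s := A i)) (by simp)]
    simp
  have hInter : P (⋂ i, A i) = 1 - P (⋃ i, (A i)ᶜ) := by
    have : (⋂ i, A i) = (⋃ i, (A i)ᶜ)ᶜ := by
      simp [Set.compl_iUnion]
    rw [this, prob_compl_eq_one_sub hUm]
  have hInterR : (P (⋂ i, A i)).toReal = 1 - (P (⋃ i, (A i)ᶜ)).toReal := by
    rw [hInter, ENNReal.toReal_sub_of_le (prob_le_one (μ := P) (s := ⋃ i, (A i)ᶜ)) (by simp)]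
    simp
  have hB : w ≤ (P (⋂ i, A i)).toReal := by
    have hsum : ∑ i, (P (A i)ᶜ).toReal = n - ∑ i, (P (A i)).toReal := by
      simp only [hcompl, Finset.sum_sub_distrib, Finset.sum_const, Finset.card_univ,
        Fintype.card_fin, nsmul_eq_mul, mul_one]
    have hqs : ∑ i, u i ≤ ∑ i, (P (A i)).toReal := Finset.sum_le_sum fun i _ => hq i
    rw [hInterR]
    rw [hsum] at hU
    linarith
  -- inclusion into the event for Z
  have hsub : (⋂ i, A i) ⊆ {ω | Z ω ≤ ∑ i, q i} := by
    intro ω hω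
    simp only [Set.mem_iInter] at hω
    simp only [Set.mem_setOf_eq, hZ]
    exact Finset.sum_le_sum fun i _ => hω i
  have hZq : w ≤ (P {ω | Z ω ≤ ∑ i, q i}).toReal :=
    hB.trans (ENNReal.toReal_mono (measure_ne_top _ _) (measure_mono hsub))
  -- Cantelli
  have hc := cantelli_aux P hZm hZ2 ht
  rw [← hμZ] at hc
  have hset : {ω | Z ω ≤ μZ - t} = {ω | Z ω ≤ ∑ i, q i} := by
    ext ω; simp [htdef]
  rw [hset] at hc
  set v := variance Z P with hv
  have hv0 : 0 ≤ v := variance_nonneg _ _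
  have hwv : w ≤ v / (v + t ^ 2) := hZq.trans hc
  have hden : 0 < v + t ^ 2 := by positivity
  have hwv' : w * (v + t ^ 2) ≤ v := (le_div_iff₀ hden).1 hwv
  have h1w : 0 < 1 - w := by linarith
  have key : t ^ 2 * (w / (1 - w)) ≤ v := by
    rw [mul_div_assoc' , div_le_iff₀ h1w]
    nlinarith
  rw [hσZ]
  calc t * Real.sqrt (w / (1 - w)) = Real.sqrt (t ^ 2 * (w / (1 - w))) := by
        rw [Real.sqrt_mul (sq_nonneg t), Real.sqrt_sq ht.le]
    _ ≤ Real.sqrt v := Real.sqrt_le_sqrt key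
end
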